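/- Let (a_n) be an increasing sequence of reals tending to ∞ and let C ⊂ (0, ∞) be countable. For every 0 ≤ p < 1 there exists a p-large set E ⊆ ℝ such that for every x ∈ ℝ and every y ∈ C, the sequence (x + y·a_n) is not contained in E. -/

import Mathlib

open MeasureTheory Filter

/-- A measurable set `E ⊆ ℝ` is `p`-large if `m(E ∩ [k, k+1]) ≥ p` for every integer `k`. -/
def PLarge (p : ℝ) (E : Set ℝ) : Prop :=
  ∀ k : ℤ, ENNReal.ofReal p ≤ volume (E ∩ Set.Icc (k : ℝ) (k + 1))

/-- Recursively chosen indices placing intervals far apart. -/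
noncomputable def auxN (a : ℕ → ℝ) (y δ : ℝ) (hch : ∀ R : ℝ, ∃ n, R ≤ y * a n)
    (e : ℕ ≃ ℤ) : ℕ → ℕ
  | 0 => Classical.choose (hch 0)
  | (t + 1) => Classical.choose (hch (((e t : ℤ) : ℝ) * δ + y * a (auxN a y δ hch e t) + δ + 2
      - ((e (t + 1) : ℤ) : ℝ) * δ))

lemma aux_single (a : ℕ → ℝ) (hlim : Tendsto a atTop atTop) (y δ : ℝ)
    (hy : 0 < y) (hδ : 0 < δ) :
    ∃ G : Set ℝ, MeasurableSet G ∧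
      (∀ m : ℤ, volume (G ∩ Set.Icc (m : ℝ) (m + 1)) ≤ ENNReal.ofReal δ) ∧
      (∀ x : ℝ, ∃ n : ℕ, x + y * a n ∈ G) := by
  classical
  have hya : Tendsto (fun n => y * a n) atTop atTop := hlim.const_mul_atTop hy
  have hch : ∀ R : ℝ, ∃ n, R ≤ y * a n := fun R => (hya.eventually_ge_atTop R).exists
  set e : ℕ ≃ ℤ := (Denumerable.eqv ℤ).symm with he
  set L : ℕ → ℝ := fun t => ((e t : ℤ) : ℝ) * δ + y * a (auxN a y δ hch e t) with hL
  have hsep : ∀ t, L t + δ + 2 ≤ L (t + 1) := by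
    intro t
    have h := Classical.choose_spec (hch (((e t : ℤ) : ℝ) * δ + y * a (auxN a y δ hch e t)
      + δ + 2 - ((e (t + 1) : ℤ) : ℝ) * δ))
    have hNt : auxN a y δ hch e (t + 1) = Classical.choose (hch (((e t : ℤ) : ℝ) * δ
      + y * a (auxN a y δ hch e t) + δ + 2 - ((e (t + 1) : ℤ) : ℝ) * δ)) := rfl
    simp only [hL]
    rw [hNt]
    linarith
  have key : ∀ t t' : ℕ, t < t' → L t + δ + 2 ≤ L t' := by
    intro t t' h
    induction t' with
    | zero => omega
    | succ k ih =>
      rcases Nat.lt_succ_iff_lt_or_eq.mp h with h' | h'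
      · have h1 := ih h'
        have h2 := hsep k
        linarith
      · subst h'
        exact hsep t
  refine ⟨⋃ t, Set.Icc (L t) (L t + δ), MeasurableSet.iUnion (fun t => measurableSet_Icc),
    ?_, ?_⟩
  · intro m
    set I := Set.Icc (m : ℝ) (m + 1) with hI
    have huniq : ∃ t0 : ℕ, ∀ t, Set.Icc (L t) (L t + δ) ∩ I ⊆ Set.Icc (L t0) (L t0 + δ) := by
      by_cases hex : ∃ t, (Set.Icc (L t) (L t + δ) ∩ I).Nonempty
      · obtain ⟨t0, w, hw⟩ := hex
        refine ⟨t0, fun t z hz => ?_⟩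
        have hwJ := hw.1
        have hwI := hw.2
        have hzJ := hz.1
        have hzI := hz.2
        rw [hI, Set.mem_Icc] at hwI hzI
        rw [Set.mem_Icc] at hwJ hzJ
        rcases lt_trichotomy t t0 with h1 | h1 | h1
        · exfalso
          have := key t t0 h1
          linarith
        · subst h1; exact hz.1
        · exfalso
          have := key t0 t h1
          linarith
      · push_neg at hex
        refine ⟨0, fun t z hz => ?_⟩
        rw [hex t] at hz
        exact hz.elim
    obtain ⟨t0, ht0⟩ := huniq
    calc volume ((⋃ t, Set.Icc (L t) (L t + δ)) ∩ I)
        = volume (⋃ t, Set.Icc (L t) (L t + δ) ∩ I) := by rw [Set.iUnion_inter]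
      _ ≤ volume (Set.Icc (L t0) (L t0 + δ)) :=
          measure_mono (Set.iUnion_subset fun t => ht0 t)
      _ = ENNReal.ofReal δ := by rw [Real.volume_Icc]; ring_nf
  · intro x
    set j : ℤ := ⌊x / δ⌋ with hj
    set t : ℕ := e.symm j with ht
    refine ⟨auxN a y δ hch e t, Set.mem_iUnion.mpr ⟨t, ?_⟩⟩
    have het : (e t : ℤ) = j := by rw [ht, Equiv.apply_symm_apply]
    have h1 : (j : ℝ) * δ ≤ x := by
      have := Int.floor_le (x / δ)
      rw [← hj] at this
      calc (j : ℝ) * δ ≤ (x / δ) * δ := by nlinarith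
        _ = x := by field_simp
    have h2 : x ≤ ((j : ℝ) + 1) * δ := by
      have := (Int.lt_floor_add_one (x / δ)).le
      rw [← hj] at this
      calc x = (x / δ) * δ := by field_simp
        _ ≤ ((j : ℝ) + 1) * δ := by nlinarith
    simp only [hL, het, Set.mem_Icc]
    constructor
    · linarith
    · linarith

theorem stmt_12 (a : ℕ → ℝ) (hmono : StrictMono a) (hlim : Tendsto a atTop atTop)
    (C : Set ℝ) (hC : C.Countable) (hCpos : C ⊆ Set.Ioi 0)
    (p : ℝ) (hp0 : 0 ≤ p) (hp1 : p < 1) :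
    ∃ E : Set ℝ, MeasurableSet E ∧ PLarge p E ∧
      ∀ x : ℝ, ∀ y ∈ C, ¬ (∀ n, x + y * a n ∈ E) := by
  classical
  have hp1' : (0 : ℝ) < 1 - p := by linarith
  obtain ⟨f, hfC, hfpos⟩ : ∃ f : ℕ → ℝ, C ⊆ Set.range f ∧ ∀ i, 0 < f i := by
    rcases Set.eq_empty_or_nonempty C with h | h
    · exact ⟨fun _ => 1, by simp [h], fun _ => one_pos⟩
    · obtain ⟨f, hf⟩ := Set.Countable.exists_eq_range hC h
      exact ⟨f, hf ▸ le_refl _, fun i => hCpos (hf ▸ Set.mem_range_self i)⟩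
  have hδ : ∀ i : ℕ, (0 : ℝ) < (1 - p) / 2 / 2 ^ i := fun i => by positivity
  choose G hGm hGvol hGcov using
    fun i : ℕ => aux_single a hlim (f i) ((1 - p) / 2 / 2 ^ i) (hfpos i) (hδ i)
  refine ⟨(⋃ i, G i)ᶜ, (MeasurableSet.iUnion hGm).compl, ?_, ?_⟩
  · intro k
    set I := Set.Icc (k : ℝ) (k + 1) with hI
    have hIvol : volume I = 1 := by
      rw [hI, Real.volume_Icc]
      norm_num
    have hGI : volume ((⋃ i, G i) ∩ I) ≤ ENNReal.ofReal (1 - p) := by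
      calc volume ((⋃ i, G i) ∩ I) = volume (⋃ i, G i ∩ I) := by rw [Set.iUnion_inter]
        _ ≤ ∑' i, volume (G i ∩ I) := measure_iUnion_le _
        _ ≤ ∑' i, ENNReal.ofReal ((1 - p) / 2 / 2 ^ i) :=
            ENNReal.tsum_le_tsum (fun i => hGvol i k)
        _ = ENNReal.ofReal (∑' i : ℕ, (1 - p) / 2 / 2 ^ i) :=
            (ENNReal.ofReal_tsum_of_nonneg (fun i => (hδ i).le)
              (summable_geometric_two' _)).symm
        _ = ENNReal.ofReal (1 - p) := by rw [tsum_geometric_two']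
    have hsplit : volume I ≤ volume ((⋃ i, G i)ᶜ ∩ I) + volume ((⋃ i, G i) ∩ I) := by
      refine (measure_mono ?_).trans (measure_union_le _ _)
      intro z hz
      by_cases h : z ∈ ⋃ i, G i
      · exact Or.inr ⟨h, hz⟩
      · exact Or.inl ⟨h, hz⟩
    have h1 : (1 : ENNReal) ≤ volume ((⋃ i, G i)ᶜ ∩ I) + ENNReal.ofReal (1 - p) := by
      calc (1 : ENNReal) = volume I := hIvol.symm
        _ ≤ volume ((⋃ i, G i)ᶜ ∩ I) + volume ((⋃ i, G i) ∩ I) := hsplit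
        _ ≤ volume ((⋃ i, G i)ᶜ ∩ I) + ENNReal.ofReal (1 - p) :=
            add_le_add le_rfl hGI
    have hadd : ENNReal.ofReal p + ENNReal.ofReal (1 - p) = 1 := by
      rw [← ENNReal.ofReal_add hp0 (by linarith)]
      norm_num
    exact (ENNReal.add_le_add_iff_right ENNReal.ofReal_ne_top).mp (hadd ▸ h1)
  · intro x y hy hall
    obtain ⟨i, rfl⟩ := hfC hy
    obtain ⟨n, hn⟩ := hGcov i x
    exact hall n (Set.mem_iUnion.mpr ⟨i, hn⟩)
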